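/- Let B ∈ M_m(ℝ) ⊗ M_n(ℝ) and define W^{1+i}(B) := { c ∈ ℝ : c(1+i) ∈ W(B + iB^Γ) }, where W denotes the numerical range over complex unit vectors. Then μ_max(B) ∈ W^{1+i}(B), i.e., μ_max(B) ≤ W^{1+i}_max(B), and similarly μ_min(B) ≥ W^{1+i}_min(B). -/

import Mathlib

open Matrix Complex

noncomputable section

def vKron {α β : Type*} (v : α → ℝ) (w : β → ℝ) : α × β → ℝ := fun p => v p.1 * w p.2

def cKron {α β : Type*} (v : α → ℂ) (w : β → ℂ) : α × β → ℂ := fun p => v p.1 * w p.2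

/-- Partial transpose on the second tensor factor. -/
def pt {α β : Type*} (B : Matrix (α × β) (α × β) ℝ) : Matrix (α × β) (α × β) ℝ :=
  Matrix.of fun p q => B (p.1, q.2) (q.1, p.2)

/-- Values of the quadratic form of `B` on real unit product vectors. -/
def prodSet {α β : Type*} [Fintype α] [Fintype β] (B : Matrix (α × β) (α × β) ℝ) : Set ℝ :=
  {r | ∃ (v : α → ℝ) (w : β → ℝ), v ⬝ᵥ v = 1 ∧ w ⬝ᵥ w = 1 ∧
    r = vKron v w ⬝ᵥ B.mulVec (vKron v w)}

/-- The numerical range of a complex matrix. -/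
def numRange {N : Type*} [Fintype N] (A : Matrix N N ℂ) : Set ℂ :=
  {z | ∃ x : N → ℂ, star x ⬝ᵥ x = 1 ∧ z = star x ⬝ᵥ A.mulVec x}

/-- `W^{1+i}(B) = {c ∈ ℝ : c(1+i) ∈ W(B + iB^Γ)}`. -/
def W1i {α β : Type*} [Fintype α] [Fintype β] (B : Matrix (α × β) (α × β) ℝ) : Set ℝ :=
  {c | (c : ℂ) * (1 + Complex.I) ∈
    numRange (B.map (fun t => (t : ℂ)) + Complex.I • (pt B).map (fun t => (t : ℂ)))}

lemma cast_quad {ι : Type*} [Fintype ι] (M : Matrix ι ι ℝ) (u : ι → ℝ) :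
    star (fun i => (u i : ℂ)) ⬝ᵥ (M.map (fun t => (t:ℂ))).mulVec (fun i => (u i : ℂ))
      = ((u ⬝ᵥ M.mulVec u : ℝ) : ℂ) := by
  simp only [dotProduct, mulVec, Matrix.map_apply, Pi.star_apply, RCLike.star_def, conj_ofReal]
  push_cast
  rfl

lemma pt_quad {α β : Type*} [Fintype α] [Fintype β] (B : Matrix (α × β) (α × β) ℝ)
    (v : α → ℝ) (w : β → ℝ) :
    vKron v w ⬝ᵥ (pt B).mulVec (vKron v w) = vKron v w ⬝ᵥ B.mulVec (vKron v w) := by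
  have h : ∀ (M : Matrix (α×β) (α×β) ℝ), vKron v w ⬝ᵥ M.mulVec (vKron v w)
      = ∑ x : (α×β) × (α×β), vKron v w x.1 * M x.1 x.2 * vKron v w x.2 := by
    intro M
    rw [Fintype.sum_prod_type]
    simp [dotProduct, mulVec, Finset.mul_sum, mul_assoc]
  rw [h, h]
  refine Fintype.sum_equiv ⟨fun x => ((x.1.1, x.2.2), (x.2.1, x.1.2)),
    fun x => ((x.1.1, x.2.2), (x.2.1, x.1.2)), by intro x; simp, by intro x; simp⟩ _ _ ?_
  intro x
  simp only [Equiv.coe_fn_mk, vKron, pt, Matrix.of_apply]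
  ring

lemma vKron_dot {α β : Type*} [Fintype α] [Fintype β] (v : α → ℝ) (w : β → ℝ) :
    vKron v w ⬝ᵥ vKron v w = (v ⬝ᵥ v) * (w ⬝ᵥ w) := by
  simp only [dotProduct, vKron, Fintype.sum_prod_type, Finset.sum_mul, Finset.mul_sum]
  rw [Finset.sum_comm]
  exact Finset.sum_congr rfl fun b _ => Finset.sum_congr rfl fun a _ => by ring

lemma unit_norm {N : Type*} [Fintype N] (x : N → ℂ) (hx : star x ⬝ᵥ x = 1) (p : N) :
    norm (x p) ≤ 1 := by
  have h : (∑ i, Complex.normSq (x i) : ℝ) = 1 := by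
    have := hx
    simp only [dotProduct, Pi.star_apply, RCLike.star_def] at this
    have h2 : (((∑ i, Complex.normSq (x i) : ℝ)) : ℂ) = 1 := by
      push_cast
      rw [← this]
      exact Finset.sum_congr rfl fun i _ => by rw [Complex.normSq_eq_conj_mul_self]
    exact_mod_cast h2
  have h1 : Complex.normSq (x p) ≤ 1 := by
    rw [← h]
    exact Finset.single_le_sum (fun i _ => Complex.normSq_nonneg _) (Finset.mem_univ p)
  have := Complex.sq_norm (x p)
  nlinarith [norm_nonneg (x p)]

lemma quad_abs_le {N : Type*} [Fintype N] (A : Matrix N N ℂ) (x : N → ℂ)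
    (hx : star x ⬝ᵥ x = 1) :
    norm (star x ⬝ᵥ A.mulVec x) ≤ ∑ p, ∑ q, norm (A p q) := by
  simp only [dotProduct, mulVec, Pi.star_apply]
  calc norm (∑ p, star (x p) * ∑ q, A p q * x q)
      ≤ ∑ p, norm (star (x p) * ∑ q, A p q * x q) := by
        exact (norm_sum_le _ _)
    _ ≤ ∑ p, ∑ q, norm (A p q) := by
        refine Finset.sum_le_sum fun p _ => ?_
        rw [norm_mul]
        have h1 : norm (star (x p)) ≤ 1 := by
          rw [RCLike.star_def, Complex.norm_conj]; exact unit_norm x hx p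
        have h2 : norm (∑ q, A p q * x q) ≤ ∑ q, norm (A p q) := by
          calc norm (∑ q, A p q * x q) ≤ ∑ q, norm (A p q * x q) :=
              norm_sum_le _ _
            _ ≤ ∑ q, norm (A p q) := by
              refine Finset.sum_le_sum fun q _ => ?_
              rw [norm_mul]
              have := unit_norm x hx q
              nlinarith [norm_nonneg (A p q), norm_nonneg (x q)]
        calc norm (star (x p)) * norm (∑ q, A p q * x q)
            ≤ 1 * (∑ q, norm (A p q)) := by
              apply mul_le_mul h1 h2 (norm_nonneg _)
              exact zero_le_one
          _ = _ := one_mul _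

lemma mem_W1i_of_prodSet {α β : Type*} [Fintype α] [Fintype β]
    (B : Matrix (α × β) (α × β) ℝ) {μ : ℝ} (hμ : μ ∈ prodSet B) : μ ∈ W1i B := by
  obtain ⟨v, w, hv, hw, hμ⟩ := hμ
  refine ⟨fun i => ((vKron v w i : ℝ) : ℂ), ?_, ?_⟩
  · have : star (fun i => ((vKron v w i : ℝ) : ℂ)) ⬝ᵥ (fun i => ((vKron v w i : ℝ) : ℂ))
        = ((vKron v w ⬝ᵥ vKron v w : ℝ) : ℂ) := by
      simp only [dotProduct, Pi.star_apply, RCLike.star_def, conj_ofReal]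
      push_cast
      rfl
    rw [this, vKron_dot, hv, hw]
    norm_num
  · rw [add_mulVec, dotProduct_add, smul_mulVec, dotProduct_smul,
      cast_quad B (vKron v w), cast_quad (pt B) (vKron v w), pt_quad, ← hμ]
    rw [smul_eq_mul]
    ring

lemma W1i_bdd {α β : Type*} [Fintype α] [Fintype β] (B : Matrix (α × β) (α × β) ℝ) :
    ∃ K : ℝ, ∀ c ∈ W1i B, |c| ≤ K := by
  set A := B.map (fun t => (t : ℂ)) + Complex.I • (pt B).map (fun t => (t : ℂ)) with hA
  refine ⟨∑ p, ∑ q, norm (A p q), ?_⟩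
  intro c hc
  obtain ⟨x, hx, hz⟩ := hc
  have h1 : |c| ≤ norm ((c : ℂ) * (1 + Complex.I)) := by
    rw [norm_mul, Complex.norm_real, Real.norm_eq_abs]
    have habs : (1 : ℝ) ≤ norm (1 + Complex.I) := by
      have : norm (1 + Complex.I) = Real.sqrt 2 := by
        rw [Complex.norm_def]
        congr 1
        simp [Complex.normSq_apply]
        norm_num
      rw [this]
      nlinarith [Real.sq_sqrt (by norm_num : (2:ℝ) ≥ 0), Real.sqrt_nonneg 2]
    nlinarith [abs_nonneg c]
  rw [hz] at h1
  exact h1.trans (quad_abs_le A x hx)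

theorem stmt5 {m n : ℕ} (B : Matrix (Fin m × Fin n) (Fin m × Fin n) ℝ)
    (μmax μmin : ℝ) (hmax : IsGreatest (prodSet B) μmax) (hmin : IsLeast (prodSet B) μmin) :
    μmax ∈ W1i B ∧ μmin ∈ W1i B ∧ μmax ≤ sSup (W1i B) ∧ sInf (W1i B) ≤ μmin := by
  have h1 : μmax ∈ W1i B := mem_W1i_of_prodSet B hmax.1
  have h2 : μmin ∈ W1i B := mem_W1i_of_prodSet B hmin.1
  obtain ⟨K, hK⟩ := W1i_bdd B
  have hbdd : W1i B ⊆ Set.Icc (-K) K := fun c hc => abs_le.mp (hK c hc)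
  refine ⟨h1, h2, le_csSup (BddAbove.mono hbdd bddAbove_Icc) h1,
    csInf_le (BddBelow.mono hbdd bddBelow_Icc) h2⟩
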